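/- In ℚ[y1,y4], the ideal I = ⟨g9, g12⟩ is equal to the ideal generated by the six polynomials 2*y1^9 + 3*y1*y4^2 − 6*y1^5*y4, 6*y4*y1^8 − 15*y1^4*y4^2 + 2*y4^3, 3*y4^2*y1^5 − 7*y4^3*y1, y4^3*y1^4 − 2*y4^4, y4^4*y1, and y4^5. (This is the Gröbner-basis computation for the ideal of relations of H*(E6/D5·S1;ℚ) with respect to the order y1 > y4.) -/

import Mathlib

open MvPolynomial

/-- Gröbner-basis computation for the ideal of relations of `H^*(E₆/D₅·S¹;ℚ)`. -/
theorem E6_D5_groebner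
    (y1 y4 g9 g12 : MvPolynomial (Fin 2) ℚ)
    (hy1 : y1 = X 0) (hy4 : y4 = X 1)
    (hg9 : g9 = 2 * y1 ^ 9 + 3 * y1 * y4 ^ 2 - 6 * y1 ^ 5 * y4)
    (hg12 : g12 = y4 ^ 3 - 6 * y1 ^ 4 * y4 ^ 2 + y1 ^ 12)
    (I : Ideal (MvPolynomial (Fin 2) ℚ)) (hI : I = Ideal.span {g9, g12}) :
    I = Ideal.span {2 * y1 ^ 9 + 3 * y1 * y4 ^ 2 - 6 * y1 ^ 5 * y4,
      6 * y4 * y1 ^ 8 - 15 * y1 ^ 4 * y4 ^ 2 + 2 * y4 ^ 3,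
      3 * y4 ^ 2 * y1 ^ 5 - 7 * y4 ^ 3 * y1,
      y4 ^ 3 * y1 ^ 4 - 2 * y4 ^ 4, y4 ^ 4 * y1, y4 ^ 5} := by
  subst hy1 hy4 hg9 hg12 hI
  apply le_antisymm
  · rw [Ideal.span_le]
    rintro p hp
    simp only [Set.mem_insert_iff, Set.mem_singleton_iff] at hp
    rcases hp with rfl | rfl
    · exact Ideal.subset_span (by simp)
    · have h1 : (2 * X 0 ^ 9 + 3 * X 0 * X 1 ^ 2 - 6 * X 0 ^ 5 * X 1 :
          MvPolynomial (Fin 2) ℚ) ∈ Ideal.span {2 * X 0 ^ 9 + 3 * X 0 * X 1 ^ 2 - 6 * X 0 ^ 5 * X 1,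
          6 * X 1 * X 0 ^ 8 - 15 * X 0 ^ 4 * X 1 ^ 2 + 2 * X 1 ^ 3,
          3 * X 1 ^ 2 * X 0 ^ 5 - 7 * X 1 ^ 3 * X 0,
          X 1 ^ 3 * X 0 ^ 4 - 2 * X 1 ^ 4, X 1 ^ 4 * X 0, X 1 ^ 5} :=
        Ideal.subset_span (by simp)
      have h2 : (6 * X 1 * X 0 ^ 8 - 15 * X 0 ^ 4 * X 1 ^ 2 + 2 * X 1 ^ 3 :
          MvPolynomial (Fin 2) ℚ) ∈ Ideal.span {2 * X 0 ^ 9 + 3 * X 0 * X 1 ^ 2 - 6 * X 0 ^ 5 * X 1,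
          6 * X 1 * X 0 ^ 8 - 15 * X 0 ^ 4 * X 1 ^ 2 + 2 * X 1 ^ 3,
          3 * X 1 ^ 2 * X 0 ^ 5 - 7 * X 1 ^ 3 * X 0,
          X 1 ^ 3 * X 0 ^ 4 - 2 * X 1 ^ 4, X 1 ^ 4 * X 0, X 1 ^ 5} :=
        Ideal.subset_span (by simp)
      have key := Ideal.add_mem _
        (Ideal.mul_mem_left _ (C (1/2 : ℚ) * X 0 ^ 3) h1)
        (Ideal.mul_mem_left _ (C (1/2 : ℚ)) h2)
      have hC : (C (1/2 : ℚ) : MvPolynomial (Fin 2) ℚ) * 2 = 1 := by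
        rw [← map_ofNat (C : ℚ →+* MvPolynomial (Fin 2) ℚ) 2, ← C_mul]; norm_num
      rw [SetLike.mem_coe]
      convert key using 1
      linear_combination -(X 1 ^ 3 - 6 * X 0 ^ 4 * X 1 ^ 2 + X 0 ^ 12 :
        MvPolynomial (Fin 2) ℚ) * hC
  · rw [Ideal.span_le]
    rintro p hp
    simp only [Set.mem_insert_iff, Set.mem_singleton_iff] at hp
    rcases hp with rfl | rfl | rfl | rfl | rfl | rfl <;> rw [SetLike.mem_coe, Ideal.mem_span_pair]
    · exact ⟨1, 0, by ring⟩
    · exact ⟨-(X 0 ^ 3), 2, by ring⟩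
    · exact ⟨-(X 0 ^ 4 + 3 * X 1), 2 * X 0, by ring⟩
    · exact ⟨-(2 * X 0 ^ 7 + 5 * X 0 ^ 3 * X 1), 4 * X 0 ^ 4 - 2 * X 1, by ring⟩
    · exact ⟨-(6 * X 0 ^ 8 + 14 * X 0 ^ 4 * X 1 - 3 * X 1 ^ 2),
        12 * X 0 ^ 5 - 8 * X 0 * X 1, by ring⟩
    · exact ⟨-(3 * X 0 ^ 11 + 6 * X 0 ^ 7 * X 1 - 4 * X 0 ^ 3 * X 1 ^ 2),
        6 * X 0 ^ 8 - 6 * X 0 ^ 4 * X 1 + X 1 ^ 2, by ring⟩
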